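/- arXiv:2605.24057 — 2 statements merged into one kernel-verified Lean document; each statement's English description precedes it below -/
import Mathlib

section
/- At the symmetric collapsed state where μ_1 = … = μ_K = E[z], the Hessian of the negative log-likelihood L(μ) = -E_z[LSE_k(-(β/2)‖z-μ_k‖²)] equals (β/K)δ_{kl}δ^{ab} - (β²/K)(δ_{kl} - 1/K)Σ^{ab}, where Σ = Cov(z). -/
open scoped BigOperators
open MeasureTheory Metric

namespace HessAux

variable {d K : ℕ}

/-- projection CLM picking coordinate (j,i) -/
noncomputable def prj (j : Fin K) (i : Fin d) : (Fin K → Fin d → ℝ) →L[ℝ] ℝ :=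
  (ContinuousLinearMap.proj (R := ℝ) (φ := fun _ : Fin d => ℝ) i).comp (ContinuousLinearMap.proj (R := ℝ) (φ := fun _ : Fin K => Fin d → ℝ) j)

@[simp] lemma prj_apply (j : Fin K) (i : Fin d) (v : Fin K → Fin d → ℝ) :
    prj j i v = v j i := rfl

/-- CLM with coefficient matrix -/
noncomputable def Dlin (coef : Fin K → Fin d → ℝ) : (Fin K → Fin d → ℝ) →L[ℝ] ℝ :=
  ∑ j, ∑ i, coef j i • prj j i

@[simp] lemma Dlin_apply (coef : Fin K → Fin d → ℝ) (v : Fin K → Fin d → ℝ) :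
    Dlin coef v = ∑ j, ∑ i, coef j i * v j i := by
  simp [Dlin]

lemma Dlin_apply_single (coef : Fin K → Fin d → ℝ) (k : Fin K) (a : Fin d) :
    Dlin coef (Pi.single k (Pi.single a 1)) = coef k a := by
  rw [Dlin_apply]
  rw [Finset.sum_eq_single k]
  · rw [Finset.sum_eq_single a]
    · simp
    · intro i _ hi; simp [Pi.single_apply, hi]
    · simp
  · intro j _ hj; simp [Pi.single_apply, hj]
  · simp

lemma norm_Dlin_le (coef : Fin K → Fin d → ℝ) :
    ‖Dlin coef‖ ≤ ∑ j, ∑ i, |coef j i| := by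
  refine ContinuousLinearMap.opNorm_le_bound _ (by positivity) fun v => ?_
  rw [Dlin_apply, Finset.sum_mul]
  refine (norm_sum_le _ _).trans (Finset.sum_le_sum fun j _ => ?_)
  rw [Finset.sum_mul]
  refine (norm_sum_le _ _).trans (Finset.sum_le_sum fun i _ => ?_)
  rw [Real.norm_eq_abs, abs_mul]
  have h1 : |v j i| ≤ ‖v‖ := by
    calc |v j i| = ‖v j i‖ := rfl
    _ ≤ ‖v j‖ := norm_le_pi_norm (v j) i
    _ ≤ ‖v‖ := norm_le_pi_norm v j
  exact mul_le_mul_of_nonneg_left h1 (abs_nonneg _)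

lemma continuous_Dlin {α : Type*} [TopologicalSpace α] (coef : α → Fin K → Fin d → ℝ)
    (h : ∀ j i, Continuous fun c => coef c j i) :
    Continuous fun c => Dlin (coef c) := by
  unfold Dlin
  exact continuous_finset_sum _ fun j _ => continuous_finset_sum _ fun i _ =>
    ((h j i).smul continuous_const)

end HessAux

namespace HessAux

variable {d K : ℕ} (β : ℝ) (c : Fin d → ℝ)

/-- exponent -/
noncomputable def ee (m : Fin K → Fin d → ℝ) (j : Fin K) : ℝ := -(β / 2) * ∑ i, (c i - m j i) ^ 2

/-- partition function -/
noncomputable def SS (m : Fin K → Fin d → ℝ) : ℝ := ∑ j, Real.exp (ee β c m j)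

/-- responsibility -/
noncomputable def rr (m : Fin K → Fin d → ℝ) (j : Fin K) : ℝ := Real.exp (ee β c m j) / SS β c m

lemma SS_pos [NeZero K] (m : Fin K → Fin d → ℝ) : 0 < SS β c m :=
  Finset.sum_pos (fun j _ => Real.exp_pos _) (by simp [Finset.univ_nonempty])

lemma Dlin_smul (s : ℝ) (coef : Fin K → Fin d → ℝ) :
    s • Dlin coef = Dlin fun j i => s * coef j i := by
  ext v; simp [Finset.mul_sum, mul_assoc]

lemma Dlin_sum {ι : Type*} (s : Finset ι) (coef : ι → Fin K → Fin d → ℝ) :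
    (∑ x ∈ s, Dlin (coef x)) = Dlin fun j i => ∑ x ∈ s, coef x j i := by
  ext v
  simp only [ContinuousLinearMap.sum_apply, Dlin_apply, Finset.sum_mul]
  rw [Finset.sum_comm]
  exact Finset.sum_congr rfl fun j _ => Finset.sum_comm

lemma Dlin_sub (c1 c2 : Fin K → Fin d → ℝ) :
    Dlin c1 - Dlin c2 = Dlin fun j i => c1 j i - c2 j i := by
  ext v; simp [sub_mul, Finset.sum_sub_distrib]

lemma hasFDerivAt_ee (m : Fin K → Fin d → ℝ) (j : Fin K) :
    HasFDerivAt (fun m' => ee β c m' j)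
      (Dlin fun j' i => if j' = j then β * (c i - m j i) else 0) m := by
  have h : ∀ i : Fin d, HasFDerivAt (fun m' : Fin K → Fin d → ℝ => (c i - m' j i) ^ 2)
      ((2 * (c i - m j i)) • (-(prj j i))) m := by
    intro i
    have h1 : HasFDerivAt (fun m' : Fin K → Fin d → ℝ => c i - m' j i) (-(prj j i)) m := by
      exact (prj j i).hasFDerivAt.const_sub (c i)
    have h2 := h1.mul h1
    have : (fun m' : Fin K → Fin d → ℝ => (c i - m' j i) ^ 2)
        = fun m' => (c i - m' j i) * (c i - m' j i) := by funext m'; ring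
    rw [this]
    refine h2.congr_fderiv (Eq.symm ?_)
    module
  have h2 := (HasFDerivAt.fun_sum (fun i (_ : i ∈ Finset.univ) => h i)).const_mul (-(β / 2))
  refine h2.congr_fderiv (Eq.symm ?_)
  ext v
  simp only [Dlin_apply, ContinuousLinearMap.smul_apply, ContinuousLinearMap.sum_apply,
    ContinuousLinearMap.neg_apply, prj_apply, smul_eq_mul, ite_mul, zero_mul]
  rw [Finset.sum_comm, Finset.mul_sum]
  refine Finset.sum_congr rfl fun i _ => ?_
  rw [Finset.sum_ite_eq' Finset.univ j]
  simp; ring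

lemma hasFDerivAt_SS [NeZero K] (m : Fin K → Fin d → ℝ) :
    HasFDerivAt (fun m' => SS β c m')
      (Dlin fun j i => Real.exp (ee β c m j) * (β * (c i - m j i))) m := by
  have h : ∀ j : Fin K, HasFDerivAt (fun m' => Real.exp (ee β c m' j))
      (Dlin fun j' i => Real.exp (ee β c m j) * (if j' = j then β * (c i - m j i) else 0)) m := by
    intro j
    have := (hasFDerivAt_ee β c m j).exp
    rwa [Dlin_smul] at this
  have h2 := HasFDerivAt.fun_sum (fun j (_ : j ∈ Finset.univ) => h j)
  rw [Dlin_sum] at h2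
  refine h2.congr_fderiv (Eq.symm (congrArg Dlin ?_))
  funext j i
  simp [mul_ite, mul_zero, Finset.sum_ite_eq]

lemma hasFDerivAt_expee (m : Fin K → Fin d → ℝ) (j : Fin K) :
    HasFDerivAt (fun m' => Real.exp (ee β c m' j))
      (Dlin fun j' i => Real.exp (ee β c m j) * (if j' = j then β * (c i - m j i) else 0)) m := by
  have := (hasFDerivAt_ee β c m j).exp
  rwa [Dlin_smul] at this

lemma hasFDerivAt_logSS [NeZero K] (m : Fin K → Fin d → ℝ) :
    HasFDerivAt (fun m' => Real.log (SS β c m'))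
      (Dlin fun j i => rr β c m j * (β * (c i - m j i))) m := by
  have h := (hasFDerivAt_SS β c m).log (ne_of_gt (SS_pos β c m))
  rw [Dlin_smul] at h
  refine h.congr_fderiv (Eq.symm (congrArg Dlin ?_))
  funext j i
  unfold rr
  ring

lemma Dlin_add (c1 c2 : Fin K → Fin d → ℝ) :
    Dlin c1 + Dlin c2 = Dlin fun j i => c1 j i + c2 j i := by
  ext v; simp [add_mul, Finset.sum_add_distrib]

lemma Dlin_single (s : ℝ) (k : Fin K) (a : Fin d) :
    Dlin (fun j i => if j = k then if i = a then s else 0 else 0) = s • prj k a := by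
  ext v
  simp only [Dlin_apply, ite_mul, zero_mul, ContinuousLinearMap.smul_apply, prj_apply,
    smul_eq_mul]
  rw [Finset.sum_comm]
  simp [Finset.sum_ite_eq']

lemma hasFDerivAt_rr [NeZero K] (m : Fin K → Fin d → ℝ) (k : Fin K) :
    HasFDerivAt (fun m' => rr β c m' k)
      (Dlin fun j i => rr β c m k *
        ((if j = k then β * (c i - m j i) else 0) - rr β c m j * (β * (c i - m j i)))) m := by
  have hS := ne_of_gt (SS_pos β c m)
  have hinv : HasDerivAt (fun y : ℝ => y⁻¹) (-((SS β c m) ^ 2)⁻¹) (SS β c m) :=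
    hasDerivAt_inv hS
  have hSinv := hinv.comp_hasFDerivAt m (hasFDerivAt_SS β c m)
  have h := (hasFDerivAt_expee β c m k).mul hSinv
  have hfun : (fun m' => rr β c m' k)
      = fun m' => Real.exp (ee β c m' k) * (SS β c m')⁻¹ := by
    funext m'; rw [rr, div_eq_mul_inv]
  rw [hfun]
  rw [Dlin_smul, Dlin_smul, Dlin_smul, Dlin_add] at h
  refine h.congr_fderiv (Eq.symm (congrArg Dlin ?_))
  funext j i
  unfold rr
  by_cases hjk : j = k
  · subst hjk
    simp only [if_pos rfl, Function.comp_apply]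
    field_simp
    ring
  · simp only [if_neg hjk, Function.comp_apply]
    field_simp
    ring

/-- the first-derivative integrand in direction `(k,a)` -/
noncomputable def gg (k : Fin K) (a : Fin d) (m : Fin K → Fin d → ℝ) : ℝ :=
  rr β c m k * (β * (c a - m k a))

/-- coefficient matrix of the derivative of `gg` -/
noncomputable def DD2coef (k : Fin K) (a : Fin d) (m : Fin K → Fin d → ℝ)
    (j : Fin K) (i : Fin d) : ℝ :=
  β * (c a - m k a) * (rr β c m k *
      ((if j = k then β * (c i - m j i) else 0) - rr β c m j * (β * (c i - m j i))))
    + (if j = k then if i = a then -(rr β c m k * β) else 0 else 0)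

lemma hasFDerivAt_gg [NeZero K] (m : Fin K → Fin d → ℝ) (k : Fin K) (a : Fin d) :
    HasFDerivAt (gg β c k a) (Dlin (DD2coef β c k a m)) m := by
  have haff : HasFDerivAt (fun m' : Fin K → Fin d → ℝ => β * (c a - m' k a))
      (β • -(prj k a)) m := by
    have h1 : HasFDerivAt (fun m' : Fin K → Fin d → ℝ => c a - m' k a) (-(prj k a)) m := by
      exact (prj k a).hasFDerivAt.const_sub (c a)
    simpa using h1.const_mul β
  have h := (hasFDerivAt_rr β c m k).mul haff
  have e1 : rr β c m k • (β • -(prj k a))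
      = Dlin (fun j i => if j = k then if i = a then -(rr β c m k * β) else 0 else 0) := by
    rw [Dlin_single]
    module
  rw [e1, Dlin_smul, Dlin_add] at h
  refine h.congr_fderiv (Eq.symm (congrArg Dlin ?_))
  funext j i
  unfold DD2coef
  ring

lemma rr_nonneg [NeZero K] (m : Fin K → Fin d → ℝ) (j : Fin K) : 0 ≤ rr β c m j :=
  div_nonneg (Real.exp_pos _).le (SS_pos β c m).le

lemma rr_le_one [NeZero K] (m : Fin K → Fin d → ℝ) (j : Fin K) : rr β c m j ≤ 1 := by
  rw [rr, div_le_one (SS_pos β c m)]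
  exact Finset.single_le_sum (f := fun j => Real.exp (ee β c m j))
    (fun j _ => (Real.exp_pos _).le) (Finset.mem_univ j)

lemma abs_rr_le_one [NeZero K] (m : Fin K → Fin d → ℝ) (j : Fin K) : |rr β c m j| ≤ 1 := by
  rw [abs_of_nonneg (rr_nonneg β c m j)]; exact rr_le_one β c m j

lemma abs_entry_le (m : Fin K → Fin d → ℝ) (j : Fin K) (i : Fin d) : |m j i| ≤ ‖m‖ := by
  calc |m j i| = ‖m j i‖ := rfl
  _ ≤ ‖m j‖ := norm_le_pi_norm (m j) i
  _ ≤ ‖m‖ := norm_le_pi_norm m j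

lemma norm_lt_of_ball {m₀ m : Fin K → Fin d → ℝ} (hm : m ∈ Metric.ball m₀ 1) :
    ‖m‖ ≤ ‖m₀‖ + 1 := by
  have : ‖m - m₀‖ < 1 := by rw [← dist_eq_norm]; exact Metric.mem_ball.mp hm
  calc ‖m‖ = ‖m₀ + (m - m₀)‖ := by ring_nf
  _ ≤ ‖m₀‖ + ‖m - m₀‖ := norm_add_le _ _
  _ ≤ ‖m₀‖ + 1 := by linarith

lemma continuous_ee (m : Fin K → Fin d → ℝ) (j : Fin K) :
    Continuous fun c : Fin d → ℝ => ee β c m j := by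
  unfold ee; fun_prop

lemma continuous_SS (m : Fin K → Fin d → ℝ) :
    Continuous fun c : Fin d → ℝ => SS β c m := by
  unfold SS
  exact continuous_finset_sum _ fun j _ => (continuous_ee β m j).rexp

lemma continuous_rr [NeZero K] (m : Fin K → Fin d → ℝ) (j : Fin K) :
    Continuous fun c : Fin d → ℝ => rr β c m j :=
  ((continuous_ee β m j).rexp).div (continuous_SS β m) fun c => ne_of_gt (SS_pos β c m)

/-- at the collapsed point all responsibilities are 1/K -/
lemma rr_collapsed [NeZero K] (zbar : Fin d → ℝ) (j : Fin K) :
    rr β c (fun _ => zbar) j = 1 / (K : ℝ) := by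
  have hee : ∀ j' : Fin K, ee β c (fun _ => zbar) j' = ee β c (fun _ => zbar) j := fun _ => rfl
  rw [rr, SS]
  rw [Finset.sum_congr rfl fun j' _ => congrArg Real.exp (hee j')]
  rw [Finset.sum_const, Finset.card_univ, Fintype.card_fin, nsmul_eq_mul]
  have hKne : (K:ℝ) ≠ 0 := Nat.cast_ne_zero.mpr (NeZero.ne K)
  field_simp

end HessAux

namespace HessAux

variable {d K : ℕ} (β : ℝ)

/-- coefficient matrix of the derivative of `log ∘ SS` -/
noncomputable def coef1 (c : Fin d → ℝ) (m : Fin K → Fin d → ℝ) (j : Fin K) (i : Fin d) : ℝ :=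
  rr β c m j * (β * (c i - m j i))

lemma hasFDerivAt_logSS' [NeZero K] (c : Fin d → ℝ) (m : Fin K → Fin d → ℝ) :
    HasFDerivAt (fun m' => Real.log (SS β c m')) (Dlin (coef1 β c m)) m :=
  hasFDerivAt_logSS β c m

lemma norm_Dlin_coef1_le [NeZero K] (hβ : 0 < β) (c : Fin d → ℝ) {m₀ m : Fin K → Fin d → ℝ}
    (hm : m ∈ Metric.ball m₀ 1) :
    ‖Dlin (coef1 β c m)‖ ≤ ∑ j : Fin K, ∑ i : Fin d, β * (|c i| + (‖m₀‖ + 1)) := by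
  refine (norm_Dlin_le _).trans (Finset.sum_le_sum fun j _ => Finset.sum_le_sum fun i _ => ?_)
  rw [coef1, abs_mul, abs_mul]
  have h1 : |c i - m j i| ≤ |c i| + (‖m₀‖ + 1) := by
    refine (abs_sub _ _).trans ?_
    have := (abs_entry_le m j i).trans (norm_lt_of_ball hm)
    linarith
  have h2 : |β| * |c i - m j i| ≤ β * (|c i| + (‖m₀‖ + 1)) := by
    rw [abs_of_pos hβ]
    exact mul_le_mul_of_nonneg_left h1 hβ.le
  calc |rr β c m j| * (|β| * |c i - m j i|) ≤ 1 * (β * (|c i| + (‖m₀‖ + 1))) :=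
    mul_le_mul (abs_rr_le_one β c m j) h2 (by positivity) one_pos.le
  _ = _ := one_mul _

lemma norm_Dlin_DD2coef_le [NeZero K] (hβ : 0 < β) (c : Fin d → ℝ) (k : Fin K) (a : Fin d)
    {m₀ m : Fin K → Fin d → ℝ} (hm : m ∈ Metric.ball m₀ 1) :
    ‖Dlin (DD2coef β c k a m)‖ ≤ ∑ j : Fin K, ∑ i : Fin d,
      (2 * β ^ 2 * (|c a| + (‖m₀‖ + 1)) * (|c i| + (‖m₀‖ + 1)) + β) := by
  refine (norm_Dlin_le _).trans (Finset.sum_le_sum fun j _ => Finset.sum_le_sum fun i _ => ?_)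
  set M := ‖m₀‖ + 1 with hM
  have hM0 : 0 ≤ M := by have := norm_nonneg m₀; simp [hM]; linarith
  have hce : ∀ i' : Fin d, |c i' - m j i'| ≤ |c i'| + M := by
    intro i'
    refine (abs_sub _ _).trans ?_
    have := (abs_entry_le m j i').trans (norm_lt_of_ball hm)
    linarith
  have hca : |c a - m k a| ≤ |c a| + M := by
    refine (abs_sub _ _).trans ?_
    have := (abs_entry_le m k a).trans (norm_lt_of_ball hm)
    linarith
  rw [DD2coef]
  refine (abs_add_le _ _).trans ?_
  have hA : |β * (c a - m k a)| ≤ β * (|c a| + M) := by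
    rw [abs_mul, abs_of_pos hβ]
    exact mul_le_mul_of_nonneg_left hca hβ.le
  have hin : |(if j = k then β * (c i - m j i) else 0) - rr β c m j * (β * (c i - m j i))|
      ≤ 2 * (β * (|c i| + M)) := by
    refine (abs_sub _ _).trans ?_
    have t1 : |if j = k then β * (c i - m j i) else 0| ≤ β * (|c i| + M) := by
      split
      · rw [abs_mul, abs_of_pos hβ]
        exact mul_le_mul_of_nonneg_left (hce i) hβ.le
      · simp; positivity
    have t2 : |rr β c m j * (β * (c i - m j i))| ≤ β * (|c i| + M) := by
      rw [abs_mul]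
      calc |rr β c m j| * |β * (c i - m j i)| ≤ 1 * (β * (|c i| + M)) := by
            refine mul_le_mul (abs_rr_le_one β c m j) ?_ (abs_nonneg _) one_pos.le
            rw [abs_mul, abs_of_pos hβ]
            exact mul_le_mul_of_nonneg_left (hce i) hβ.le
      _ = β * (|c i| + M) := one_mul _
    linarith
  have hB : |rr β c m k *
      ((if j = k then β * (c i - m j i) else 0) - rr β c m j * (β * (c i - m j i)))|
      ≤ 2 * (β * (|c i| + M)) := by
    rw [abs_mul]
    calc |rr β c m k| * _ ≤ 1 * (2 * (β * (|c i| + M))) :=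
      mul_le_mul (abs_rr_le_one β c m k) hin (abs_nonneg _) one_pos.le
    _ = _ := one_mul _
  have hb1 : |β * (c a - m k a) * (rr β c m k *
      ((if j = k then β * (c i - m j i) else 0) - rr β c m j * (β * (c i - m j i))))|
      ≤ 2 * β ^ 2 * (|c a| + M) * (|c i| + M) := by
    rw [abs_mul]
    have := mul_le_mul hA hB (abs_nonneg _) (by positivity)
    calc |β * (c a - m k a)| * |rr β c m k *
        ((if j = k then β * (c i - m j i) else 0) - rr β c m j * (β * (c i - m j i)))|
        ≤ (β * (|c a| + M)) * (2 * (β * (|c i| + M))) := this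
    _ = 2 * β ^ 2 * (|c a| + M) * (|c i| + M) := by ring
  have hb2 : |if j = k then if i = a then -(rr β c m k * β) else 0 else 0| ≤ β := by
    split
    · split
      · rw [abs_neg, abs_mul, abs_of_pos hβ]
        calc |rr β c m k| * β ≤ 1 * β := mul_le_mul_of_nonneg_right (abs_rr_le_one β c m k) hβ.le
        _ = β := one_mul β
      · simp; exact hβ.le
    · simp; exact hβ.le
  linarith

lemma continuous_coef1 [NeZero K] (m : Fin K → Fin d → ℝ) (j : Fin K) (i : Fin d) :
    Continuous fun c : Fin d → ℝ => coef1 β c m j i := by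
  unfold coef1
  exact (continuous_rr β m j).mul
    (continuous_const.mul ((continuous_apply i).sub continuous_const))

lemma continuous_Dlin_coef1 [NeZero K] (m : Fin K → Fin d → ℝ) :
    Continuous fun c : Fin d → ℝ => Dlin (coef1 β c m) :=
  continuous_Dlin _ (continuous_coef1 β m)

lemma continuous_DD2coef [NeZero K] (m : Fin K → Fin d → ℝ) (k : Fin K) (a : Fin d)
    (j : Fin K) (i : Fin d) :
    Continuous fun c : Fin d → ℝ => DD2coef β c k a m j i := by
  unfold DD2coef
  have hbase : ∀ (i' : Fin d), Continuous fun c : Fin d → ℝ => β * (c i' - m j i') :=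
    fun i' => continuous_const.mul ((continuous_apply i').sub continuous_const)
  have hbase2 : ∀ (j' : Fin K) (i' : Fin d),
      Continuous fun c : Fin d → ℝ => β * (c i' - m j' i') :=
    fun j' i' => continuous_const.mul ((continuous_apply i').sub continuous_const)
  apply Continuous.add
  · refine Continuous.mul (continuous_const.mul ((continuous_apply a).sub continuous_const)) ?_
    refine (continuous_rr β m k).mul (Continuous.sub ?_ ((continuous_rr β m j).mul (hbase i)))
    by_cases hjk : j = k
    · simp only [if_pos hjk]; exact hbase i
    · simp only [if_neg hjk]; exact continuous_const
  · by_cases hjk : j = k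
    · simp only [if_pos hjk]
      by_cases hia : i = a
      · simp only [if_pos hia]
        exact ((continuous_rr β m k).mul continuous_const).neg
      · simp only [if_neg hia]; exact continuous_const
    · simp only [if_neg hjk]; exact continuous_const

lemma continuous_Dlin_DD2coef [NeZero K] (m : Fin K → Fin d → ℝ) (k : Fin K) (a : Fin d) :
    Continuous fun c : Fin d → ℝ => Dlin (DD2coef β c k a m) :=
  continuous_Dlin _ (continuous_DD2coef β m k a)

lemma continuous_logSS [NeZero K] (m : Fin K → Fin d → ℝ) :
    Continuous fun c : Fin d → ℝ => Real.log (SS β c m) := by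
  rw [continuous_iff_continuousAt]
  intro c
  exact ContinuousAt.log (continuous_SS β m).continuousAt (ne_of_gt (SS_pos β c m))

/-- bound on |log SS| -/
lemma abs_logSS_le [NeZero K] (hβ : 0 < β) (c : Fin d → ℝ) (m : Fin K → Fin d → ℝ) :
    |Real.log (SS β c m)| ≤ Real.log K + (β / 2) * ∑ j : Fin K, ∑ i, (c i - m j i) ^ 2 := by
  have hKpos : (0:ℝ) < K := by
    have := NeZero.pos K; exact_mod_cast this
  have hK1 : (1:ℝ) ≤ K := by exact_mod_cast NeZero.one_le
  have hlogK : 0 ≤ Real.log K := Real.log_nonneg hK1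
  have hsumnn : 0 ≤ ∑ j : Fin K, ∑ i, (c i - m j i) ^ 2 :=
    Finset.sum_nonneg fun j _ => Finset.sum_nonneg fun i _ => sq_nonneg _
  rw [abs_le]
  constructor
  · -- lower bound: log SS ≥ ee j₀ ≥ -(β/2) ∑∑
    obtain ⟨j₀⟩ : Nonempty (Fin K) := Fin.pos_iff_nonempty.mp (NeZero.pos K)
    have h1 : Real.exp (ee β c m j₀) ≤ SS β c m :=
      Finset.single_le_sum (f := fun j => Real.exp (ee β c m j))
        (fun j _ => (Real.exp_pos _).le) (Finset.mem_univ j₀)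
    have h2 : ee β c m j₀ ≤ Real.log (SS β c m) := by
      rw [← Real.log_exp (ee β c m j₀)]
      exact Real.log_le_log (Real.exp_pos _) h1
    have h3 : -((β / 2) * ∑ j : Fin K, ∑ i, (c i - m j i) ^ 2) ≤ ee β c m j₀ := by
      rw [ee, neg_mul]
      have : (∑ i, (c i - m j₀ i) ^ 2) ≤ ∑ j : Fin K, ∑ i, (c i - m j i) ^ 2 :=
        Finset.single_le_sum (f := fun j => ∑ i, (c i - m j i) ^ 2)
          (fun j _ => Finset.sum_nonneg fun i _ => sq_nonneg _) (Finset.mem_univ j₀)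
      nlinarith
    linarith
  · -- upper bound: SS ≤ K
    have h1 : SS β c m ≤ K := by
      rw [SS]
      calc ∑ j : Fin K, Real.exp (ee β c m j) ≤ ∑ j : Fin K, 1 := by
            refine Finset.sum_le_sum fun j _ => ?_
            rw [show (1:ℝ) = Real.exp 0 by simp]
            apply Real.exp_le_exp.mpr
            rw [ee, neg_mul]
            have : 0 ≤ (β/2) * ∑ i, (c i - m j i)^2 := by positivity
            linarith
      _ = K := by simp
    have h2 := Real.log_le_log (SS_pos β c m) h1
    have h3 : 0 ≤ (β / 2) * ∑ j : Fin K, ∑ i, (c i - m j i) ^ 2 := by positivity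
    linarith

end HessAux

namespace HessAux

open Metric

variable {d K : ℕ} {β : ℝ} {Ω : Type*} [MeasurableSpace Ω]
  {P : Measure Ω} [IsProbabilityMeasure P]
  {z : Ω → Fin d → ℝ}

section Stage

variable [NeZero K] (hβ : 0 < β) (hmeas : Measurable z)
  (hint1 : ∀ a, Integrable (fun ω => z ω a) P)
  (hint2 : ∀ a b, Integrable (fun ω => z ω a * z ω b) P)

include hβ hmeas hint1 hint2

lemma integrable_sq (i : Fin d) (r : ℝ) : Integrable (fun ω => (z ω i - r) ^ 2) P := by
  have : (fun ω => (z ω i - r) ^ 2)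
      = fun ω => z ω i * z ω i - (2 * r) * z ω i + r ^ 2 := by
    funext ω; ring
  rw [this]
  exact ((hint2 i i).sub ((hint1 i).const_mul (2 * r))).add (integrable_const _)

lemma integrable_logSS (m : Fin K → Fin d → ℝ) :
    Integrable (fun ω => Real.log (SS β (z ω) m)) P := by
  refine Integrable.mono' (g := fun ω =>
      Real.log K + (β / 2) * ∑ j : Fin K, ∑ i, (z ω i - m j i) ^ 2) ?_ ?_ ?_
  · refine (integrable_const _).add (Integrable.const_mul ?_ _)
    exact integrable_finset_sum _ fun j _ => integrable_finset_sum _ fun i _ =>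
      integrable_sq hβ hmeas hint1 hint2 i (m j i)
  · exact ((continuous_logSS β m).measurable.comp hmeas).aestronglyMeasurable
  · exact Filter.Eventually.of_forall fun ω => abs_logSS_le β hβ (z ω) m

lemma integrable_bound1 (m₀ : Fin K → Fin d → ℝ) :
    Integrable (fun ω => ∑ j : Fin K, ∑ i : Fin d, β * (|z ω i| + (‖m₀‖ + 1))) P := by
  exact integrable_finset_sum _ fun j _ => integrable_finset_sum _ fun i _ =>
    (((hint1 i).abs.add (integrable_const _)).const_mul β)

lemma stage1 (m₀ : Fin K → Fin d → ℝ) :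
    HasFDerivAt (fun m => ∫ ω, Real.log (SS β (z ω) m) ∂P)
      (∫ ω, Dlin (coef1 β (z ω) m₀) ∂P) m₀ := by
  apply hasFDerivAt_integral_of_dominated_of_fderiv_le
    (F' := fun m ω => Dlin (coef1 β (z ω) m))
    (bound := fun ω => ∑ j : Fin K, ∑ i : Fin d, β * (|z ω i| + (‖m₀‖ + 1)))
    (s := Metric.ball m₀ 1) (Metric.ball_mem_nhds m₀ one_pos)
  · exact Filter.Eventually.of_forall fun m =>
      ((continuous_logSS β m).measurable.comp hmeas).aestronglyMeasurable
  · exact integrable_logSS hβ hmeas hint1 hint2 m₀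
  · exact ((continuous_Dlin_coef1 β m₀).measurable.comp hmeas).aestronglyMeasurable
  · exact Filter.Eventually.of_forall fun ω m hm => norm_Dlin_coef1_le β hβ (z ω) hm
  · exact integrable_bound1 hβ hmeas hint1 hint2 m₀
  · exact Filter.Eventually.of_forall fun ω m _ => hasFDerivAt_logSS' β (z ω) m

lemma integrable_Dlin_coef1 (m₀ : Fin K → Fin d → ℝ) :
    Integrable (fun ω => Dlin (coef1 β (z ω) m₀)) P := by
  refine Integrable.mono' (integrable_bound1 hβ hmeas hint1 hint2 m₀)
    (((continuous_Dlin_coef1 β m₀).measurable.comp hmeas).aestronglyMeasurable) ?_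
  exact Filter.Eventually.of_forall fun ω =>
    norm_Dlin_coef1_le β hβ (z ω) (mem_ball_self one_pos)

/-- the inner fderiv of the theorem, evaluated -/
lemma inner_fderiv_eq (k : Fin K) (a : Fin d) (m : Fin K → Fin d → ℝ) :
    fderiv ℝ (fun m' => -∫ ω, Real.log (SS β (z ω) m') ∂P) m (Pi.single k (Pi.single a 1))
      = -∫ ω, gg β (z ω) k a m ∂P := by
  have h1 := (stage1 hβ hmeas hint1 hint2 m).fun_neg
  rw [h1.fderiv]
  rw [ContinuousLinearMap.neg_apply]
  rw [ContinuousLinearMap.integral_apply (integrable_Dlin_coef1 hβ hmeas hint1 hint2 m)]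
  congr 1
  refine integral_congr_ae (Filter.Eventually.of_forall fun ω => ?_)
  show Dlin (coef1 β (z ω) m) (Pi.single k (Pi.single a 1)) = gg β (z ω) k a m
  rw [Dlin_apply_single]
  rfl

omit hβ hmeas hint1 hint2 in
lemma continuous_gg [NeZero K'] (β : ℝ) (k : Fin K') (a : Fin d') (m : Fin K' → Fin d' → ℝ) :
    Continuous fun c : Fin d' → ℝ => gg β c k a m := continuous_coef1 β m k a

lemma integrable_gg (k : Fin K) (a : Fin d) (m : Fin K → Fin d → ℝ) :
    Integrable (fun ω => gg β (z ω) k a m) P := by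
  refine Integrable.mono' (g := fun ω => β * (|z ω a| + ‖m‖))
    (((hint1 a).abs.add (integrable_const _)).const_mul β)
    (((continuous_gg β k a m).measurable.comp hmeas).aestronglyMeasurable) ?_
  refine Filter.Eventually.of_forall fun ω => ?_
  rw [gg, Real.norm_eq_abs, abs_mul, abs_mul]
  have h1 : |z ω a - m k a| ≤ |z ω a| + ‖m‖ := by
    refine (abs_sub _ _).trans ?_
    have := abs_entry_le m k a
    linarith
  calc |rr β (z ω) m k| * (|β| * |z ω a - m k a|) ≤ 1 * (β * (|z ω a| + ‖m‖)) := by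
        refine mul_le_mul (abs_rr_le_one _ _ _ _) ?_ (by positivity) one_pos.le
        rw [abs_of_pos hβ]
        exact mul_le_mul_of_nonneg_left h1 hβ.le
  _ = _ := one_mul _

lemma integrable_bound2 (a : Fin d) (m₀ : Fin K → Fin d → ℝ) :
    Integrable (fun ω => ∑ j : Fin K, ∑ i : Fin d,
      (2 * β ^ 2 * (|z ω a| + (‖m₀‖ + 1)) * (|z ω i| + (‖m₀‖ + 1)) + β)) P := by
  refine integrable_finset_sum _ fun j _ => integrable_finset_sum _ fun i _ => ?_
  refine Integrable.add ?_ (integrable_const β)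
  have habs : Integrable (fun ω => |z ω a| * |z ω i|) P := by
    have : (fun ω => |z ω a| * |z ω i|) = fun ω => |z ω a * z ω i| := by
      funext ω; rw [abs_mul]
    rw [this]
    exact (hint2 a i).abs
  have hexp : (fun ω => 2 * β ^ 2 * (|z ω a| + (‖m₀‖ + 1)) * (|z ω i| + (‖m₀‖ + 1)))
      = fun ω => 2 * β ^ 2 * (|z ω a| * |z ω i| + (‖m₀‖ + 1) * |z ω a|
          + (‖m₀‖ + 1) * |z ω i| + (‖m₀‖ + 1) ^ 2) := by
    funext ω; ring
  rw [hexp]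
  exact ((((habs.add ((hint1 a).abs.const_mul _)).add
    ((hint1 i).abs.const_mul _)).add (integrable_const _)).const_mul _)

lemma stage2 (k : Fin K) (a : Fin d) (m₀ : Fin K → Fin d → ℝ) :
    HasFDerivAt (fun m => ∫ ω, gg β (z ω) k a m ∂P)
      (∫ ω, Dlin (DD2coef β (z ω) k a m₀) ∂P) m₀ := by
  apply hasFDerivAt_integral_of_dominated_of_fderiv_le
    (F' := fun m ω => Dlin (DD2coef β (z ω) k a m))
    (bound := fun ω => ∑ j : Fin K, ∑ i : Fin d,
      (2 * β ^ 2 * (|z ω a| + (‖m₀‖ + 1)) * (|z ω i| + (‖m₀‖ + 1)) + β))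
    (s := Metric.ball m₀ 1) (Metric.ball_mem_nhds m₀ one_pos)
  · exact Filter.Eventually.of_forall fun m =>
      (((continuous_gg β k a m).measurable.comp hmeas).aestronglyMeasurable)
  · exact integrable_gg hβ hmeas hint1 hint2 k a m₀
  · exact (((continuous_Dlin_DD2coef β m₀ k a).measurable.comp hmeas).aestronglyMeasurable)
  · exact Filter.Eventually.of_forall fun ω m hm => norm_Dlin_DD2coef_le β hβ (z ω) k a hm
  · exact integrable_bound2 hβ hmeas hint1 hint2 a m₀
  · exact Filter.Eventually.of_forall fun ω m _ => hasFDerivAt_gg β (z ω) m k a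

lemma integrable_Dlin_DD2coef (k : Fin K) (a : Fin d) (m₀ : Fin K → Fin d → ℝ) :
    Integrable (fun ω => Dlin (DD2coef β (z ω) k a m₀)) P := by
  refine Integrable.mono' (integrable_bound2 hβ hmeas hint1 hint2 a m₀)
    (((continuous_Dlin_DD2coef β m₀ k a).measurable.comp hmeas).aestronglyMeasurable) ?_
  exact Filter.Eventually.of_forall fun ω =>
    norm_Dlin_DD2coef_le β hβ (z ω) k a (mem_ball_self one_pos)

end Stage

end HessAux

open HessAux in
/-- Hessian of the negative log-likelihood `L(μ) = -E_z[LSE_k(-(β/2)‖z-μ_k‖²)]`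
at the symmetric collapsed state `μ_1 = ⋯ = μ_K = E[z]`:
`(β/K)δ_{kl}δ^{ab} - (β²/K)(δ_{kl} - 1/K)Σ^{ab}` where `Σ = Cov(z)`. -/
theorem hessian_at_symmetric_state {Ω : Type*} [MeasurableSpace Ω]
    (P : Measure Ω) [IsProbabilityMeasure P]
    (d K : ℕ) (hK : 2 ≤ K) (β : ℝ) (hβ : 0 < β)
    (z : Ω → Fin d → ℝ) (hmeas : Measurable z)
    (hint1 : ∀ a, Integrable (fun ω => z ω a) P)
    (hint2 : ∀ a b, Integrable (fun ω => z ω a * z ω b) P)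
    (zbar : Fin d → ℝ) (hzbar : ∀ a, zbar a = ∫ ω, z ω a ∂P)
    (Sig : Matrix (Fin d) (Fin d) ℝ)
    (hSig : ∀ a b, Sig a b = ∫ ω, (z ω a - zbar a) * (z ω b - zbar b) ∂P)
    (k l : Fin K) (a b : Fin d) :
    fderiv ℝ (fun m : Fin K → Fin d → ℝ =>
        fderiv ℝ (fun m' : Fin K → Fin d → ℝ =>
            -∫ ω, Real.log (∑ j, Real.exp (-(β / 2) * ∑ i, (z ω i - m' j i) ^ 2)) ∂P) m
          (Pi.single k (Pi.single a 1)))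
      (fun _ => zbar) (Pi.single l (Pi.single b 1))
      = (β / (K : ℝ)) * (if k = l then (1:ℝ) else 0) * (if a = b then (1:ℝ) else 0)
        - (β ^ 2 / (K : ℝ)) * ((if k = l then (1:ℝ) else 0) - 1 / (K : ℝ)) * Sig a b := by
  haveI : NeZero K := ⟨by omega⟩
  have hKne : (K:ℝ) ≠ 0 := Nat.cast_ne_zero.mpr (NeZero.ne K)
  set m₀ : Fin K → Fin d → ℝ := fun _ => zbar with hm₀
  have hrw : (fun m : Fin K → Fin d → ℝ =>
      fderiv ℝ (fun m' : Fin K → Fin d → ℝ =>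
          -∫ ω, Real.log (∑ j, Real.exp (-(β / 2) * ∑ i, (z ω i - m' j i) ^ 2)) ∂P) m
        (Pi.single k (Pi.single a 1)))
      = fun m => -∫ ω, gg β (z ω) k a m ∂P := by
    funext m
    exact inner_fderiv_eq hβ hmeas hint1 hint2 k a m
  rw [hrw]
  have h2 := (stage2 hβ hmeas hint1 hint2 k a m₀).fun_neg
  rw [h2.fderiv, ContinuousLinearMap.neg_apply,
    ContinuousLinearMap.integral_apply (integrable_Dlin_DD2coef hβ hmeas hint1 hint2 k a m₀)]
  set t : ℝ := if l = k then 1 else 0 with ht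
  set C2 : ℝ := if l = k then if b = a then -(β / K) else 0 else 0 with hC2
  have hval : ∀ ω, Dlin (DD2coef β (z ω) k a m₀) (Pi.single l (Pi.single b 1))
      = (β ^ 2 / K * (t - 1 / K)) * ((z ω a - zbar a) * (z ω b - zbar b)) + C2 := by
    intro ω
    rw [Dlin_apply_single, DD2coef]
    show β * (z ω a - zbar a) * (rr β (z ω) m₀ k *
        ((if l = k then β * (z ω b - zbar b) else 0) - rr β (z ω) m₀ l * (β * (z ω b - zbar b))))
        + (if l = k then if b = a then -(rr β (z ω) m₀ k * β) else 0 else 0) = _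
    rw [hm₀, rr_collapsed, rr_collapsed]
    rw [ht, hC2]
    by_cases hlk : l = k
    · simp only [if_pos hlk]
      by_cases hba : b = a
      · simp only [if_pos hba]; field_simp <;> ring_nf <;> tauto
      · simp only [if_neg hba]; field_simp <;> ring_nf <;> tauto
    · simp only [if_neg hlk]
      field_simp <;> ring_nf <;> tauto
  rw [show (fun ω => Dlin (DD2coef β (z ω) k a m₀) (Pi.single l (Pi.single b 1)))
      = fun ω => (β ^ 2 / K * (t - 1 / K)) * ((z ω a - zbar a) * (z ω b - zbar b)) + C2
    from funext hval]
  have hintf : Integrable (fun ω => (z ω a - zbar a) * 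
      (z ω b - zbar b)) P := by
    have hexp : (fun ω => (z ω a - zbar a) * (z ω b - zbar b))
        = fun ω => z ω a * z ω b - zbar b * z ω a - zbar a * z ω b + zbar a * zbar b := by
      funext ω; ring
    rw [hexp]
    exact (((hint2 a b).sub ((hint1 a).const_mul _)).sub ((hint1 b).const_mul _)).add
      (integrable_const _)
  rw [integral_add (hintf.const_mul _) (integrable_const _), integral_const_mul,
    integral_const, ← hSig a b]
  simp only [measure_univ, probReal_univ, ENNReal.toReal_one, one_smul, smul_eq_mul]
  rw [ht, hC2]
  by_cases hkl : k = l
  · subst hkl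
    by_cases hab : a = b
    · subst hab
      simp only [if_pos rfl, eq_self_iff_true, if_true]
      ring
    · have hba : ¬(b = a) := fun h => hab h.symm
      simp only [if_pos rfl, eq_self_iff_true, if_true, if_neg hba, if_neg hab]
      ring
  · have hlk : ¬(l = k) := fun h => hkl h.symm
    simp only [if_neg hlk, if_neg hkl]
    ring
end

section
/- With H as above and λ_max = λ_max(Σ) > 0, the smallest eigenvalue of H restricted to the anti-symmetric channel is (β/K)(1 - β λ_max), which is positive for 0 < β < 1/λ_max, zero at β = 1/λ_max, and negative for β > 1/λ_max. -/
open scoped BigOperators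

/-- The block Hessian `H_{kl} = (β/K)δ_{kl} I_d - (β²/K)(δ_{kl} - 1/K)Σ`,
acting blockwise on `ξ ∈ (ℝ^d)^K` by `(Hξ)_k = ∑_l H_{kl} ξ_l`. -/
noncomputable def Happly (K d : ℕ) (β : ℝ) (S : Matrix (Fin d) (Fin d) ℝ)
    (ξ : Fin K → Fin d → ℝ) : Fin K → Fin d → ℝ :=
  fun k => ∑ l, (((β / (K : ℝ)) * (if k = l then (1:ℝ) else 0)) • ξ l
      - ((β ^ 2 / (K : ℝ)) * ((if k = l then (1:ℝ) else 0) - 1 / (K : ℝ))) • S.mulVec (ξ l))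

/-- On the anti-symmetric channel, `H` acts as `(β/K)I - (β²/K)Σ` blockwise. -/
lemma Happly_eq (K d : ℕ) (β : ℝ) (S : Matrix (Fin d) (Fin d) ℝ)
    (ξ : Fin K → Fin d → ℝ) (hsum : (∑ k, ξ k) = 0) :
    Happly K d β S ξ = fun k => (β / (K : ℝ)) • ξ k - (β ^ 2 / (K : ℝ)) • S.mulVec (ξ k) := by
  funext k
  have hsumS : ∑ l, S.mulVec (ξ l) = 0 := by
    have : ∑ l, S.mulVec (ξ l) = S.mulVec (∑ l, ξ l) := by
      exact (map_sum (Matrix.mulVecLin S) _ _).symm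
    rw [this, hsum, Matrix.mulVec_zero]
  simp only [Happly, Finset.sum_sub_distrib, mul_sub, sub_smul, mul_ite, mul_one, mul_zero,
    ite_smul, zero_smul, Finset.sum_ite_eq, Finset.mem_univ, if_true]
  rw [← Finset.smul_sum, hsumS, smul_zero, sub_zero]

/-- The smallest eigenvalue of `H` on the anti-symmetric channel is
`(β/K)(1 - β λ_max)`: it is attained by an anti-symmetric eigenvector, every
eigenvalue of `H` on the anti-symmetric channel is at least this value, and it
is positive for `β < 1/λ_max`, zero at `β = 1/λ_max`, and negative for
`β > 1/λ_max`. -/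
theorem antisymmetric_smallest_eigenvalue (K d : ℕ) (hK : 2 ≤ K)
    (β lammax : ℝ) (hβ : 0 < β) (hlam : 0 < lammax)
    (S : Matrix (Fin d) (Fin d) ℝ) (hS : S.IsSymm) (hPSD : S.PosSemidef)
    (hmaxeig : ∃ u : Fin d → ℝ, u ≠ 0 ∧ S.mulVec u = lammax • u)
    (hmaxtop : ∀ (s : ℝ) (u : Fin d → ℝ), u ≠ 0 → S.mulVec u = s • u → s ≤ lammax) :
    (∃ ξ : Fin K → Fin d → ℝ, ξ ≠ 0 ∧ (∑ k, ξ k) = 0 ∧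
        Happly K d β S ξ = ((β / (K : ℝ)) * (1 - β * lammax)) • ξ) ∧
    (∀ (c : ℝ) (ξ : Fin K → Fin d → ℝ), ξ ≠ 0 → (∑ k, ξ k) = 0 →
        Happly K d β S ξ = c • ξ → (β / (K : ℝ)) * (1 - β * lammax) ≤ c) ∧
    (β < 1 / lammax → 0 < (β / (K : ℝ)) * (1 - β * lammax)) ∧
    (β = 1 / lammax → (β / (K : ℝ)) * (1 - β * lammax) = 0) ∧
    (1 / lammax < β → (β / (K : ℝ)) * (1 - β * lammax) < 0) := by
  have hK0 : (0:ℝ) < (K:ℝ) := by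
    have : 0 < K := by omega
    exact_mod_cast this
  refine ⟨?_, ?_, ?_, ?_, ?_⟩
  · -- existence of an anti-symmetric eigenvector
    obtain ⟨u, hu, hSu⟩ := hmaxeig
    set i0 : Fin K := ⟨0, by omega⟩
    set i1 : Fin K := ⟨1, by omega⟩
    have hne : i0 ≠ i1 := by simp [i0, i1, Fin.ext_iff]
    set w : Fin K → ℝ := fun k => if k = i0 then (1:ℝ) else if k = i1 then -1 else 0 with hw
    refine ⟨fun k => w k • u, ?_, ?_, ?_⟩
    · intro h
      apply hu
      have := congrFun h i0
      simpa [hw] using this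
    · have hwsplit : ∀ k, w k = (if k = i0 then (1:ℝ) else 0) + (if k = i1 then (-1:ℝ) else 0) := by
        intro k
        by_cases h0 : k = i0
        · subst h0; simp [w, hne, Ne.symm hne]
        · by_cases h1 : k = i1
          · subst h1; simp [w, h0]
          · simp [w, h0, h1]
      have hsw : ∑ k, w k = 0 := by
        simp only [hwsplit, Finset.sum_add_distrib, Finset.sum_ite_eq', Finset.mem_univ, if_true]
        ring
      rw [← Finset.sum_smul] at *
      simp_all
    · have hsum0 : (∑ k, (fun k => w k • u) k) = 0 := by
        have hwsplit : ∀ k, w k = (if k = i0 then (1:ℝ) else 0) + (if k = i1 then (-1:ℝ) else 0) := by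
          intro k
          by_cases h0 : k = i0
          · subst h0; simp [w, hne, Ne.symm hne]
          · by_cases h1 : k = i1
            · subst h1; simp [w, h0]
            · simp [w, h0, h1]
        have hsw : ∑ k, w k = 0 := by
          simp only [hwsplit, Finset.sum_add_distrib, Finset.sum_ite_eq', Finset.mem_univ, if_true]
          ring
        rw [← Finset.sum_smul, hsw, zero_smul]
      rw [Happly_eq K d β S _ hsum0]
      funext k
      have hmv : S.mulVec (w k • u) = (lammax * w k) • u := by
        rw [Matrix.mulVec_smul, hSu, smul_smul, mul_comm]
      show (β / (K:ℝ)) • (w k • u) - (β ^ 2 / (K:ℝ)) • S.mulVec (w k • u)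
          = ((β / (K:ℝ)) * (1 - β * lammax)) • (w k • u)
      rw [hmv, smul_smul, smul_smul, smul_smul, ← sub_smul]
      congr 1
      ring
  · -- lower bound
    intro c ξ hξ hsum heig
    rw [Happly_eq K d β S ξ hsum] at heig
    obtain ⟨k, hknz⟩ := Function.ne_iff.mp hξ
    have hknz' : ξ k ≠ 0 := by simpa using hknz
    have hk := congrFun heig k
    have hk' : (β / (K:ℝ)) • ξ k - (β ^ 2 / (K:ℝ)) • S.mulVec (ξ k) = c • ξ k := hk
    have h4 : (β ^ 2 / (K:ℝ)) • S.mulVec (ξ k) = ((β / (K:ℝ)) - c) • ξ k := by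
      rw [sub_smul]
      rw [sub_eq_iff_eq_add] at hk'
      rw [hk']
      abel
    have hb2 : (β ^ 2 / (K:ℝ)) ≠ 0 := by positivity
    have h5 : S.mulVec (ξ k) = ((β ^ 2 / (K:ℝ))⁻¹ * ((β / (K:ℝ)) - c)) • ξ k := by
      rw [← smul_smul, ← h4, inv_smul_smul₀ hb2]
    have hs := hmaxtop _ _ hknz' h5
    have hpos : (0:ℝ) < β ^ 2 / (K:ℝ) := by positivity
    rw [inv_mul_le_iff₀ hpos] at hs
    have hexp : (β / (K:ℝ)) * (1 - β * lammax) = β / (K:ℝ) - (β ^ 2 / (K:ℝ)) * lammax := by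
      ring
    linarith
  · intro h
    have h1 : β * lammax < 1 := (lt_div_iff₀ hlam).mp h
    exact mul_pos (div_pos hβ hK0) (by linarith)
  · intro h
    rw [h]
    field_simp
    ring
  · intro h
    have h1 : 1 < β * lammax := (div_lt_iff₀ hlam).mp h
    exact mul_neg_of_pos_of_neg (div_pos hβ hK0) (by linarith)
end
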